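/- Let G be a {C4, C5}-free graph and C a clique in G. If {x, y, z} is a set of three vertices disjoint from C inducing either a path P3 or a triangle K3, and every vertex of C has a neighbor in {x,y,z}, then at least one of x, y, z is adjacent to every vertex of C. -/

import Mathlib

open scoped Classical

/-- Graph on `Fin n` with the given edge list. -/
def graphOfList (n : ℕ) (l : List (ℕ × ℕ)) : SimpleGraph (Fin n) :=
  SimpleGraph.fromRel (fun a b => ((a : ℕ), (b : ℕ)) ∈ l)

/-- `G` contains no induced subgraph isomorphic to `H`. -/
def Free {α : Type*} {V : Type*} (H : SimpleGraph α) (G : SimpleGraph V) : Prop :=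
  IsEmpty (H ↪g G)

def twoP3 : SimpleGraph (Fin 6) := graphOfList 6 [(0,1),(1,2),(3,4),(4,5)]
def p3PlusK3 : SimpleGraph (Fin 6) := graphOfList 6 [(0,1),(1,2),(3,4),(4,5),(3,5)]
def twoK3 : SimpleGraph (Fin 6) := graphOfList 6 [(0,1),(1,2),(0,2),(3,4),(4,5),(3,5)]
def cycle4 : SimpleGraph (Fin 4) := graphOfList 4 [(0,1),(1,2),(2,3),(3,0)]
def cycle5 : SimpleGraph (Fin 5) := graphOfList 5 [(0,1),(1,2),(2,3),(3,4),(4,0)]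
def cycle6 : SimpleGraph (Fin 6) := graphOfList 6 [(0,1),(1,2),(2,3),(3,4),(4,5),(5,0)]

/-- `G` is `{2P3, P3+K3, 2K3, C4, C5, C6}`-free. -/
def FFree {V : Type*} (G : SimpleGraph V) : Prop :=
  Free twoP3 G ∧ Free p3PlusK3 G ∧ Free twoK3 G ∧ Free cycle4 G ∧ Free cycle5 G ∧ Free cycle6 G

/-- `v1 v2 v3 v4` form an induced `2K2` with edges `v1v2` and `v3v4`. -/
def Induced2K2 {V : Type*} (G : SimpleGraph V) (v1 v2 v3 v4 : V) : Prop :=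
  v1 ≠ v2 ∧ v1 ≠ v3 ∧ v1 ≠ v4 ∧ v2 ≠ v3 ∧ v2 ≠ v4 ∧ v3 ≠ v4 ∧
  G.Adj v1 v2 ∧ G.Adj v3 v4 ∧ ¬ G.Adj v1 v3 ∧ ¬ G.Adj v1 v4 ∧ ¬ G.Adj v2 v3 ∧ ¬ G.Adj v2 v4
lemma no_c4 {V : Type*} (G : SimpleGraph V) (h : Free cycle4 G) (a b c d : V)
    (hac : a ≠ c) (hbd : b ≠ d)
    (hab : G.Adj a b) (hbc : G.Adj b c) (hcd : G.Adj c d) (hda : G.Adj d a)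
    (hnac : ¬ G.Adj a c) (hnbd : ¬ G.Adj b d) : False := by
  have hba := hab.symm; have hcb := hbc.symm; have hdc := hcd.symm; have had := hda.symm
  have hnca : ¬ G.Adj c a := fun h' => hnac h'.symm
  have hndb : ¬ G.Adj d b := fun h' => hnbd h'.symm
  apply h.false
  refine ⟨⟨![a,b,c,d], ?_⟩, ?_⟩
  · intro i j hij
    fin_cases i <;> fin_cases j <;> simp_all
  · intro i j
    fin_cases i <;> fin_cases j <;>
      simp [cycle4, graphOfList, hab, hbc, hcd, hda, hba, hcb, hdc, had,
        hnac, hnbd, hnca, hndb] <;> assumption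

lemma no_c5 {V : Type*} (G : SimpleGraph V) (h : Free cycle5 G) (a b c d e : V)
    (hac : a ≠ c) (had : a ≠ d) (hbd : b ≠ d) (hbe : b ≠ e) (hce : c ≠ e)
    (hab : G.Adj a b) (hbc : G.Adj b c) (hcd : G.Adj c d) (hde : G.Adj d e) (hea : G.Adj e a)
    (hnac : ¬ G.Adj a c) (hnad : ¬ G.Adj a d) (hnbd : ¬ G.Adj b d)
    (hnbe : ¬ G.Adj b e) (hnce : ¬ G.Adj c e) : False := by
  have hba := hab.symm; have hcb := hbc.symm; have hdc := hcd.symm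
  have hed := hde.symm; have hae := hea.symm
  have hnca : ¬ G.Adj c a := fun h' => hnac h'.symm
  have hnda : ¬ G.Adj d a := fun h' => hnad h'.symm
  have hndb : ¬ G.Adj d b := fun h' => hnbd h'.symm
  have hneb : ¬ G.Adj e b := fun h' => hnbe h'.symm
  have hnec : ¬ G.Adj e c := fun h' => hnce h'.symm
  apply h.false
  refine ⟨⟨![a,b,c,d,e], ?_⟩, ?_⟩
  · intro i j hij
    fin_cases i <;> fin_cases j <;> simp_all
  · intro i j
    fin_cases i <;> fin_cases j <;>
      simp [cycle5, graphOfList, hab, hbc, hcd, hde, hea, hba, hcb, hdc, hed, hae,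
        hnac, hnad, hnbd, hnbe, hnce, hnca, hnda, hndb, hneb, hnec] <;> assumption

/-- For an edge `pq` outside a clique `C`, the neighborhoods in `C` are nested. -/
lemma nbhd_nested {V : Type*} (G : SimpleGraph V) (h4 : Free cycle4 G)
    (C : Set V) (hC : G.IsClique C) (p q : V) (hpq : G.Adj p q)
    (hp : p ∉ C) (hq : q ∉ C) :
    (∀ c ∈ C, G.Adj p c → G.Adj q c) ∨ (∀ c ∈ C, G.Adj q c → G.Adj p c) := by
  by_contra hcon
  push_neg at hcon
  obtain ⟨⟨u, huC, hpu, hnqu⟩, ⟨v, hvC, hqv, hnpv⟩⟩ := hcon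
  have huv : u ≠ v := fun h => hnqu (h ▸ hqv)
  have hadj : G.Adj u v := hC huC hvC huv
  exact no_c4 G h4 p u v q (fun h => hp (h ▸ hvC))
    (fun h => hq (h ▸ huC))
    hpu hadj hqv.symm hpq.symm hnpv (fun h => hnqu h.symm)

lemma p3_case {V : Type*} (G : SimpleGraph V) (h4 : Free cycle4 G) (h5 : Free cycle5 G)
    (C : Set V) (hC : G.IsClique C) (p m q : V) (hpq : p ≠ q)
    (hp : p ∉ C) (hm : m ∉ C) (hq : q ∉ C)
    (hpm : G.Adj p m) (hmq : G.Adj m q) (hnpq : ¬ G.Adj p q)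
    (hdom : ∀ c ∈ C, G.Adj c p ∨ G.Adj c m ∨ G.Adj c q) :
    (∀ c ∈ C, G.Adj p c) ∨ (∀ c ∈ C, G.Adj m c) ∨ (∀ c ∈ C, G.Adj q c) := by
  rcases nbhd_nested G h4 C hC p m hpm hp hm with s1 | s1 <;>
    rcases nbhd_nested G h4 C hC m q hmq hm hq with s2 | s2
  · -- p ≤ m, m ≤ q : q dominates
    refine Or.inr (Or.inr fun c hc => ?_)
    rcases hdom c hc with h | h | h
    · exact s2 c hc (s1 c hc h.symm)
    · exact s2 c hc h.symm
    · exact h.symm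
  · -- p ≤ m, q ≤ m : m dominates
    refine Or.inr (Or.inl fun c hc => ?_)
    rcases hdom c hc with h | h | h
    · exact s1 c hc h.symm
    · exact h.symm
    · exact s2 c hc h.symm
  · -- m ≤ p, m ≤ q : C5 unless p or q dominates
    by_contra hcon
    push_neg at hcon
    obtain ⟨⟨a, haC, hnpa⟩, _, ⟨b, hbC, hnqb⟩⟩ := hcon
    -- b is adjacent to p, not to m, not to q
    have hpb : G.Adj p b := by
      rcases hdom b hbC with h | h | h
      · exact h.symm
      · exact s1 b hbC h.symm
      · exact absurd h.symm hnqb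
    have hnmb : ¬ G.Adj m b := fun h' => hnqb (s2 b hbC h')
    -- a is adjacent to q, not to m, not to p
    have hqa : G.Adj q a := by
      rcases hdom a haC with h | h | h
      · exact absurd h.symm hnpa
      · exact absurd (s1 a haC h.symm) hnpa
      · exact h.symm
    have hnma : ¬ G.Adj m a := fun h' => hnpa (s1 a haC h')
    have hba : b ≠ a := fun h => hnpa (h ▸ hpb)
    have hadj : G.Adj b a := hC hbC haC hba
    exact no_c5 G h5 p b a q m
      (fun h => hp (h ▸ haC)) hpq (fun h => hq (h ▸ hbC)) (fun h => hm (h.symm ▸ hbC))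
      (fun h => hm (h.symm ▸ haC))
      hpb hadj hqa.symm hmq.symm hpm.symm
      hnpa hnpq (fun h' => hnqb h'.symm) (fun h' => hnmb h'.symm) (fun h' => hnma h'.symm)
  · -- m ≤ p, q ≤ m : p dominates
    refine Or.inl fun c hc => ?_
    rcases hdom c hc with h | h | h
    · exact h.symm
    · exact s1 c hc h.symm
    · exact s1 c hc (s2 c hc h.symm)

theorem clique_dominating_triple {V : Type*} (G : SimpleGraph V)
    (h4 : Free cycle4 G) (h5 : Free cycle5 G) (C : Set V) (hC : G.IsClique C)
    (x y z : V) (hxy : x ≠ y) (hxz : x ≠ z) (hyz : y ≠ z)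
    (hx : x ∉ C) (hy : y ∉ C) (hz : z ∉ C)
    (hind : (G.Adj x y ∧ G.Adj y z ∧ G.Adj x z) ∨
            (G.Adj x y ∧ G.Adj y z ∧ ¬ G.Adj x z) ∨
            (G.Adj y x ∧ G.Adj x z ∧ ¬ G.Adj y z) ∨
            (G.Adj x z ∧ G.Adj z y ∧ ¬ G.Adj x y))
    (hdom : ∀ c ∈ C, G.Adj c x ∨ G.Adj c y ∨ G.Adj c z) :
    (∀ c ∈ C, G.Adj x c) ∨ (∀ c ∈ C, G.Adj y c) ∨ (∀ c ∈ C, G.Adj z c) := by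
  rcases hind with ⟨e1, e2, e3⟩ | ⟨e1, e2, e3⟩ | ⟨e1, e2, e3⟩ | ⟨e1, e2, e3⟩
  · -- triangle
    have top : ∀ t : V, (∀ c ∈ C, G.Adj x c → G.Adj t c) →
        (∀ c ∈ C, G.Adj y c → G.Adj t c) → (∀ c ∈ C, G.Adj z c → G.Adj t c) →
        ∀ c ∈ C, G.Adj t c := by
      intro t h1 h2 h3 c hc
      rcases hdom c hc with h | h | h
      exacts [h1 c hc h.symm, h2 c hc h.symm, h3 c hc h.symm]
    have triv : ∀ t : V, ∀ c ∈ C, G.Adj t c → G.Adj t c := fun _ _ _ h => h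
    rcases nbhd_nested G h4 C hC x y e1 hx hy with s1 | s1 <;>
      rcases nbhd_nested G h4 C hC y z e2 hy hz with s2 | s2 <;>
      rcases nbhd_nested G h4 C hC x z e3 hx hz with s3 | s3
    · exact Or.inr (Or.inr (top z (fun c hc h => s2 c hc (s1 c hc h)) s2 (triv z)))
    · exact Or.inr (Or.inr (top z (fun c hc h => s2 c hc (s1 c hc h)) s2 (triv z)))
    · exact Or.inr (Or.inl (top y s1 (triv y) s2))
    · exact Or.inr (Or.inl (top y s1 (triv y) s2))
    · exact Or.inr (Or.inr (top z s3 s2 (triv z)))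
    · exact Or.inl (top x (triv x) s1 s3)
    · exact Or.inl (top x (triv x) s1 (fun c hc h => s1 c hc (s2 c hc h)))
    · exact Or.inl (top x (triv x) s1 (fun c hc h => s1 c hc (s2 c hc h)))
  · exact p3_case G h4 h5 C hC x y z hxz hx hy hz e1 e2 e3 hdom
  · have h := p3_case G h4 h5 C hC y x z hyz hy hx hz e1 e2 e3
      (fun c hc => by rcases hdom c hc with h | h | h <;> tauto)
    tauto
  · have h := p3_case G h4 h5 C hC x z y hxy hx hz hy e1 e2 e3
      (fun c hc => by rcases hdom c hc with h | h | h <;> tauto)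
    tauto
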